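/- Let N ≥ 1 be an integer and let ω = exp(2πi/(2N)) be a primitive 2N-th root of unity. Then for every t ∈ ℂ with t^{2N} ≠ 1 and t² ≠ −1, (1/(4N)) · Σ_{k=0}^{2N−1} 1/((1 − ω^k t)² (1 − ω^{−k} t)²) + 1/(2(1 + t²)²) = Q(t)/P(t), where Q(t) = 1 + 3t⁴ + (2N−1)t^{2N} + (2N+3)t^{2N+2} − (2N+3)t^{2N+4} − (2N−1)t^{2N+6} − 3t^{4N+2} − t^{4N+6} and P(t) = (1 − t²)(1 − t⁴)²(1 − t^{2N})². -/

import Mathlib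

open Finset

private lemma aux_geom {m : ℕ} {ζ t : ℂ} (hζ : ζ ^ m = 1) :
    (1 - ζ * t) * ∑ j ∈ range m, (ζ * t) ^ j = 1 - t ^ m := by
  have h := geom_sum_mul (ζ * t) m
  have h2 : (ζ * t) ^ m = t ^ m := by rw [mul_pow, hζ, one_mul]
  linear_combination -h - h2

private lemma aux_nz {m : ℕ} {ζ t : ℂ} (hζ : ζ ^ m = 1) (ht : t ^ m ≠ 1) :
    1 - ζ * t ≠ 0 := by
  intro h
  apply ht
  have h2 := aux_geom (t := t) hζ
  rw [h, zero_mul] at h2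
  linear_combination h2

private lemma aux_inv_eq {m : ℕ} {ζ t : ℂ} (hζ : ζ ^ m = 1) (ht : t ^ m ≠ 1) :
    1 / (1 - ζ * t) = (∑ j ∈ range m, (ζ * t) ^ j) / (1 - t ^ m) := by
  rw [div_eq_div_iff (aux_nz hζ ht) (sub_ne_zero.mpr (Ne.symm ht))]
  linear_combination -aux_geom (t := t) hζ

private lemma aux_rootsum {m : ℕ} {ζ : ℂ} (hζ : IsPrimitiveRoot ζ m) (j : ℕ) :
    ∑ k ∈ range m, (ζ ^ j) ^ k = if m ∣ j then (m : ℂ) else 0 := by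
  by_cases h : m ∣ j
  · rw [if_pos h, (hζ.pow_eq_one_iff_dvd j).mpr h]
    simp
  · have hne : ζ ^ j ≠ 1 := fun he => h ((hζ.pow_eq_one_iff_dvd j).mp he)
    rw [if_neg h, geom_sum_eq hne]
    have hpm : (ζ ^ j) ^ m = 1 := by
      rw [pow_right_comm, hζ.pow_eq_one, one_pow]
    rw [hpm]
    simp

private lemma aux_L1 {m : ℕ} (hm : m ≠ 0) {ζ : ℂ} (hζ : IsPrimitiveRoot ζ m) {t : ℂ}
    (ht : t ^ m ≠ 1) :
    ∑ k ∈ range m, 1 / (1 - ζ ^ k * t) = m / (1 - t ^ m) := by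
  have hpow : ∀ k : ℕ, (ζ ^ k) ^ m = 1 := fun k => by
    rw [pow_right_comm, hζ.pow_eq_one, one_pow]
  calc ∑ k ∈ range m, 1 / (1 - ζ ^ k * t)
      = ∑ k ∈ range m, (∑ j ∈ range m, (ζ ^ k * t) ^ j) / (1 - t ^ m) :=
        sum_congr rfl fun k _ => aux_inv_eq (hpow k) ht
    _ = (∑ j ∈ range m, (∑ k ∈ range m, (ζ ^ j) ^ k) * t ^ j) / (1 - t ^ m) := by
        rw [← sum_div]
        congr 1
        rw [Finset.sum_comm]
        refine sum_congr rfl fun j _ => ?_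
        rw [sum_mul]
        exact sum_congr rfl fun k _ => by rw [mul_pow, pow_right_comm]
    _ = (∑ j ∈ range m, (if m ∣ j then (m : ℂ) else 0) * t ^ j) / (1 - t ^ m) := by
        congr 1
        exact sum_congr rfl fun j _ => by rw [aux_rootsum hζ j]
    _ = m / (1 - t ^ m) := by
        congr 1
        rw [Finset.sum_eq_single_of_mem 0 (mem_range.mpr (Nat.pos_of_ne_zero hm))]
        · simp
        · intro b hb hbne
          rw [if_neg, zero_mul]
          intro hd
          exact hbne (Nat.eq_zero_of_dvd_of_lt hd (mem_range.mp hb))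

private lemma aux_inner {m : ℕ} (hm : m ≠ 0) {t : ℂ} (j : ℕ) (hj : j < m) :
    ∑ l ∈ range m, (if m ∣ (j + l) then (m : ℂ) else 0) * t ^ (j + l)
      = if j = 0 then (m : ℂ) else m * t ^ m := by
  rcases Nat.eq_zero_or_pos j with hj0 | hj0
  · subst hj0
    simp only [zero_add, if_pos rfl]
    rw [Finset.sum_eq_single_of_mem 0 (mem_range.mpr (Nat.pos_of_ne_zero hm))]
    · simp
    · intro b hb hbne
      rw [if_neg, zero_mul]
      intro hd
      exact hbne (Nat.eq_zero_of_dvd_of_lt hd (mem_range.mp hb))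
  · rw [if_neg hj0.ne']
    rw [Finset.sum_eq_single_of_mem (m - j) (mem_range.mpr (by omega))]
    · have hjm : j + (m - j) = m := by omega
      rw [hjm, if_pos dvd_rfl]
    · intro b hb hbne
      have hbm := mem_range.mp hb
      rw [if_neg, zero_mul]
      intro hd
      have hle : m ≤ j + b := Nat.le_of_dvd (by omega) hd
      have hd' : m ∣ (j + b - m) := Nat.dvd_sub hd dvd_rfl
      have h0 : j + b - m = 0 := Nat.eq_zero_of_dvd_of_lt hd' (by omega)
      omega

private lemma aux_L2 {m : ℕ} (hm : m ≠ 0) {ζ : ℂ} (hζ : IsPrimitiveRoot ζ m) {t : ℂ}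
    (ht : t ^ m ≠ 1) :
    ∑ k ∈ range m, 1 / (1 - ζ ^ k * t) ^ 2
      = m * (1 + ((m : ℂ) - 1) * t ^ m) / (1 - t ^ m) ^ 2 := by
  have hpow : ∀ k : ℕ, (ζ ^ k) ^ m = 1 := fun k => by
    rw [pow_right_comm, hζ.pow_eq_one, one_pow]
  calc ∑ k ∈ range m, 1 / (1 - ζ ^ k * t) ^ 2
      = ∑ k ∈ range m, (∑ j ∈ range m, (ζ ^ k * t) ^ j) ^ 2 / (1 - t ^ m) ^ 2 := by
        refine sum_congr rfl fun k _ => ?_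
        rw [show (1 : ℂ) / (1 - ζ ^ k * t) ^ 2 = (1 / (1 - ζ ^ k * t)) ^ 2 by
              rw [div_pow, one_pow],
            aux_inv_eq (hpow k) ht, div_pow]
    _ = ∑ k ∈ range m, (∑ j ∈ range m, ∑ l ∈ range m,
          (ζ ^ (j + l)) ^ k * t ^ (j + l)) / (1 - t ^ m) ^ 2 := by
        refine sum_congr rfl fun k _ => ?_
        congr 1
        rw [sq, Finset.sum_mul_sum]
        refine sum_congr rfl fun j _ => sum_congr rfl fun l _ => ?_
        rw [← pow_add, mul_pow, pow_right_comm]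
    _ = (∑ j ∈ range m, ∑ l ∈ range m,
          (∑ k ∈ range m, (ζ ^ (j + l)) ^ k) * t ^ (j + l)) / (1 - t ^ m) ^ 2 := by
        rw [← sum_div]
        congr 1
        rw [Finset.sum_comm]
        refine sum_congr rfl fun j _ => ?_
        rw [Finset.sum_comm]
        refine sum_congr rfl fun l _ => ?_
        rw [sum_mul]
    _ = (∑ j ∈ range m, ∑ l ∈ range m,
          (if m ∣ (j + l) then (m : ℂ) else 0) * t ^ (j + l)) / (1 - t ^ m) ^ 2 := by
        congr 1
        exact sum_congr rfl fun j _ => sum_congr rfl fun l _ => by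
          rw [aux_rootsum hζ (j + l)]
    _ = (∑ j ∈ range m, if j = 0 then (m : ℂ) else m * t ^ m) / (1 - t ^ m) ^ 2 := by
        congr 1
        exact sum_congr rfl fun j hj => aux_inner hm j (mem_range.mp hj)
    _ = m * (1 + ((m : ℂ) - 1) * t ^ m) / (1 - t ^ m) ^ 2 := by
        congr 1
        obtain ⟨n, rfl⟩ := Nat.exists_eq_succ_of_ne_zero hm
        rw [Finset.sum_range_succ']
        simp only [Nat.succ_ne_zero, if_false, if_pos rfl, Finset.sum_const,
          card_range, nsmul_eq_mul]
        push_cast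
        ring

private lemma aux_pf {a b : ℂ} (ha : 1 - a ≠ 0) (hb : 1 - b ≠ 0) (hp : 1 - a * b ≠ 0) :
    1 / ((1 - a) ^ 2 * (1 - b) ^ 2)
      = -(1 + a * b) / (1 - a * b) ^ 3
        + 2 * (a * b) / (1 - a * b) ^ 3 * (1 / (1 - a) + 1 / (1 - b))
        + 1 / (1 - a * b) ^ 2 * (1 / (1 - a) ^ 2 + 1 / (1 - b) ^ 2) := by
  have hp3 : (1 - a * b) ^ 3 ≠ 0 := pow_ne_zero _ hp
  have hp2 : (1 - a * b) ^ 2 ≠ 0 := pow_ne_zero _ hp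
  have ha2 : (1 - a) ^ 2 ≠ 0 := pow_ne_zero _ ha
  have hb2 : (1 - b) ^ 2 ≠ 0 := pow_ne_zero _ hb
  rw [div_add_div _ _ ha hb, div_add_div _ _ ha2 hb2, div_mul_div_comm, div_mul_div_comm,
    div_add_div _ _ hp3 (mul_ne_zero hp3 (mul_ne_zero ha hb)),
    div_add_div _ _ (mul_ne_zero hp3 (mul_ne_zero hp3 (mul_ne_zero ha hb)))
      (mul_ne_zero hp2 (mul_ne_zero ha2 hb2)),
    div_eq_div_iff (mul_ne_zero ha2 hb2)
      (mul_ne_zero (mul_ne_zero hp3 (mul_ne_zero hp3 (mul_ne_zero ha hb)))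
        (mul_ne_zero hp2 (mul_ne_zero ha2 hb2)))]
  ring

private lemma aux_combine {n u s : ℂ} (hn : n ≠ 0) (hu : 1 - u ≠ 0) (h1 : 1 - s ≠ 0)
    (h2 : 1 + s ≠ 0) :
    1 / (4 * n) * (2 * n * (-(1 + s) / (1 - s) ^ 3)
        + 2 * s / (1 - s) ^ 3 * (2 * n / (1 - u) + 2 * n / (1 - u))
        + 1 / (1 - s) ^ 2 * (2 * n * (1 + (2 * n - 1) * u) / (1 - u) ^ 2
            + 2 * n * (1 + (2 * n - 1) * u) / (1 - u) ^ 2))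
      + 1 / (2 * (1 + s) ^ 2)
      = (1 + 3 * s ^ 2 + (2 * n - 1) * u + (2 * n + 3) * (u * s) - (2 * n + 3) * (u * s ^ 2)
          - (2 * n - 1) * (u * s ^ 3) - 3 * (u * u * s) - (u * u * s ^ 3))
        / ((1 - s) * ((1 - s) * (1 + s)) ^ 2 * (1 - u) ^ 2) := by
  have hs3 : (1 - s) ^ 3 ≠ 0 := pow_ne_zero _ h1
  have hs2 : (1 - s) ^ 2 ≠ 0 := pow_ne_zero _ h1
  have hu2 : (1 - u) ^ 2 ≠ 0 := pow_ne_zero _ hu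
  have hd2 : (1 - s) ^ 3 * (1 - u) ≠ 0 := mul_ne_zero hs3 hu
  have hd3 : (1 - s) ^ 2 * (1 - u) ^ 2 ≠ 0 := mul_ne_zero hs2 hu2
  have hd12 : (1 - s) ^ 3 * ((1 - s) ^ 3 * (1 - u)) ≠ 0 := mul_ne_zero hs3 hd2
  have hd123 : (1 - s) ^ 3 * ((1 - s) ^ 3 * (1 - u)) * ((1 - s) ^ 2 * (1 - u) ^ 2) ≠ 0 :=
    mul_ne_zero hd12 hd3
  have h4n : (4 : ℂ) * n ≠ 0 := mul_ne_zero (by norm_num) hn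
  have hbig1 : 4 * n * ((1 - s) ^ 3 * ((1 - s) ^ 3 * (1 - u)) * ((1 - s) ^ 2 * (1 - u) ^ 2))
      ≠ 0 := mul_ne_zero h4n hd123
  have hbig2 : (2 : ℂ) * (1 + s) ^ 2 ≠ 0 := mul_ne_zero two_ne_zero (pow_ne_zero _ h2)
  have hR : (1 - s) * ((1 - s) * (1 + s)) ^ 2 * (1 - u) ^ 2 ≠ 0 :=
    mul_ne_zero (mul_ne_zero h1 (pow_ne_zero _ (mul_ne_zero h1 h2))) hu2
  rw [← add_div, ← add_div, div_mul_div_comm, div_mul_div_comm,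
    ← mul_div_assoc, div_add_div _ _ hs3 hd2, div_add_div _ _ hd12 hd3,
    div_mul_div_comm, div_add_div _ _ hbig1 hbig2,
    div_eq_div_iff (mul_ne_zero hbig1 hbig2) hR]
  ring

set_option maxHeartbeats 800000 in
/-- Molien sum for the binary dihedral group `𝔻_N ⊂ SU₂` of order `4N`: for
`ω = exp(2πi/(2N))` and `t ∈ ℂ` with `t^{2N} ≠ 1`, `t² ≠ -1`, the stated combination of the
root-of-unity sum and `1/(2(1+t²)²)` equals `Q(t)/P(t)`. -/
theorem stmt_12 (N : ℕ) (hN : 1 ≤ N) (ω : ℂ)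
    (hω : ω = Complex.exp (2 * Real.pi * Complex.I / (2 * N)))
    (t : ℂ) (ht : t ^ (2 * N) ≠ 1) (ht2 : t ^ 2 ≠ -1) :
    (1 / (4 * N : ℂ)) * (∑ k ∈ Finset.range (2 * N),
          1 / ((1 - ω ^ k * t) ^ 2 * (1 - ω ^ (-(k : ℤ)) * t) ^ 2))
        + 1 / (2 * (1 + t ^ 2) ^ 2)
      = (1 + 3 * t ^ 4 + (2 * N - 1) * t ^ (2 * N) + (2 * N + 3) * t ^ (2 * N + 2)
            - (2 * N + 3) * t ^ (2 * N + 4) - (2 * N - 1) * t ^ (2 * N + 6)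
            - 3 * t ^ (4 * N + 2) - t ^ (4 * N + 6))
        / ((1 - t ^ 2) * (1 - t ^ 4) ^ 2 * (1 - t ^ (2 * N)) ^ 2) := by
  have hm : 2 * N ≠ 0 := by omega
  have hprim : IsPrimitiveRoot ω (2 * N) := by
    have harg : (2 * (Real.pi : ℂ) * Complex.I / (2 * (N : ℂ)))
        = 2 * (Real.pi : ℂ) * Complex.I / (((2 * N : ℕ) : ℂ)) := by
      push_cast; ring
    rw [hω, harg]
    exact Complex.isPrimitiveRoot_exp (2 * N) hm
  have hω0 : ω ≠ 0 := hprim.ne_zero hm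
  have hprim' : IsPrimitiveRoot ω⁻¹ (2 * N) := hprim.inv
  have hωm : ω ^ (2 * N) = 1 := hprim.pow_eq_one
  have hne : (1 : ℂ) - t ^ (2 * N) ≠ 0 := sub_ne_zero.mpr (Ne.symm ht)
  have h2 : (1 : ℂ) - t ^ 2 ≠ 0 := by
    intro h
    apply ht
    have h1 : t ^ 2 = 1 := by linear_combination -h
    rw [pow_mul, h1, one_pow]
  have h2' : (1 : ℂ) + t ^ 2 ≠ 0 := by
    intro h
    apply ht2
    linear_combination h
  have h4 : (1 : ℂ) - t ^ 4 ≠ 0 := by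
    have he : (1 : ℂ) - t ^ 4 = (1 - t ^ 2) * (1 + t ^ 2) := by ring
    rw [he]
    exact mul_ne_zero h2 h2'
  have hNc : (N : ℂ) ≠ 0 := Nat.cast_ne_zero.mpr (by omega)
  have hpow : ∀ k : ℕ, (ω ^ k) ^ (2 * N) = 1 := fun k => by
    rw [pow_right_comm, hωm, one_pow]
  have hpow' : ∀ k : ℕ, ((ω⁻¹) ^ k) ^ (2 * N) = 1 := fun k => by
    rw [pow_right_comm, inv_pow, hωm, inv_one, one_pow]
  have hab : ∀ k : ℕ, (ω ^ k * t) * ((ω⁻¹) ^ k * t) = t ^ 2 := fun k => by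
    rw [show (ω ^ k * t) * ((ω⁻¹) ^ k * t) = (ω * ω⁻¹) ^ k * t ^ 2 by
          rw [mul_pow]; ring,
      mul_inv_cancel₀ hω0, one_pow, one_mul]
  simp only [zpow_neg, zpow_natCast, ← inv_pow]
  have hstep : ∀ k ∈ range (2 * N),
      1 / ((1 - ω ^ k * t) ^ 2 * (1 - (ω⁻¹) ^ k * t) ^ 2)
        = -(1 + t ^ 2) / (1 - t ^ 2) ^ 3
          + 2 * t ^ 2 / (1 - t ^ 2) ^ 3
              * (1 / (1 - ω ^ k * t) + 1 / (1 - (ω⁻¹) ^ k * t))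
          + 1 / (1 - t ^ 2) ^ 2
              * (1 / (1 - ω ^ k * t) ^ 2 + 1 / (1 - (ω⁻¹) ^ k * t) ^ 2) := by
    intro k _
    have h := aux_pf (a := ω ^ k * t) (b := (ω⁻¹) ^ k * t)
      (aux_nz (hpow k) ht) (aux_nz (hpow' k) ht)
      (by rw [hab k]; exact h2)
    rw [hab k] at h
    exact h
  rw [Finset.sum_congr rfl hstep, Finset.sum_add_distrib, Finset.sum_add_distrib,
    Finset.sum_const, card_range, ← Finset.mul_sum, ← Finset.mul_sum,
    Finset.sum_add_distrib, Finset.sum_add_distrib,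
    aux_L1 hm hprim ht, aux_L1 hm hprim' ht, aux_L2 hm hprim ht, aux_L2 hm hprim' ht]
  have e1 : t ^ (2 * N + 2) = t ^ (2 * N) * t ^ 2 := pow_add t (2 * N) 2
  have e2 : t ^ (2 * N + 4) = t ^ (2 * N) * (t ^ 2) ^ 2 := by rw [pow_add]; ring
  have e3 : t ^ (2 * N + 6) = t ^ (2 * N) * (t ^ 2) ^ 3 := by rw [pow_add]; ring
  have e4 : t ^ (4 * N + 2) = t ^ (2 * N) * t ^ (2 * N) * t ^ 2 := by
    rw [show 4 * N + 2 = 2 * N + (2 * N + 2) by ring, pow_add, pow_add]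
    ring
  have e5 : t ^ (4 * N + 6) = t ^ (2 * N) * t ^ (2 * N) * (t ^ 2) ^ 3 := by
    rw [show 4 * N + 6 = 2 * N + (2 * N + 6) by ring, pow_add, pow_add]
    ring
  have e6 : (3 : ℂ) * t ^ 4 = 3 * (t ^ 2) ^ 2 := by ring
  have hden : (1 - t ^ 2) * (1 - t ^ 4) ^ 2 * (1 - t ^ (2 * N)) ^ 2
      = (1 - t ^ 2) * ((1 - t ^ 2) * (1 + t ^ 2)) ^ 2 * (1 - t ^ (2 * N)) ^ 2 := by
    ring
  have hc : ((2 * N : ℕ) : ℂ) = 2 * (N : ℂ) := by push_cast; ring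
  rw [e1, e2, e3, e4, e5, e6, hden, hc, nsmul_eq_mul, hc]
  exact aux_combine hNc hne h2 h2'
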